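/- Let A be an algebra. If R ⊆ [R,R|1] holds for every reflexive compatible relation R on A, then for every congruence γ and all reflexive compatible relations S, T with S ∩ T⁻ ⊆ γ: γ ∩ (S∘T) ⊆ ((γ∩S) ∘ (γ∩T))*. -/

import Mathlib

open FirstOrder Language

universe u

/-- A binary relation on a structure `A` is compatible (admissible) if it is preserved
by every operation (function symbol) of the language. -/
def Compatible (L : Language) {A : Type u} [L.Structure A] (R : A → A → Prop) : Prop :=
  ∀ (n : ℕ) (f : L.Functions n) (a b : Fin n → A),
    (∀ i, R (a i) (b i)) → R (Structure.funMap f a) (Structure.funMap f b)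

/-- `(x, y; z, w) ∈ M(R, S)`: there is a term `t` and tuples `a R a'`, `b S b'` with
`x = t(a,b)`, `y = t(a,b')`, `z = t(a',b)`, `w = t(a',b')`. -/
def InM (L : Language) {A : Type u} [L.Structure A] (R S : A → A → Prop)
    (x y z w : A) : Prop :=
  ∃ (n m : ℕ) (t : L.Term (Fin n ⊕ Fin m)) (a a' : Fin n → A) (b b' : Fin m → A),
    (∀ i, R (a i) (a' i)) ∧ (∀ j, S (b j) (b' j)) ∧
      x = t.realize (Sum.elim a b) ∧ y = t.realize (Sum.elim a b') ∧
      z = t.realize (Sum.elim a' b) ∧ w = t.realize (Sum.elim a' b')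

/-- `[R, S | 1]`: the transitive closure of `{(z,w) : (x,x;z,w) ∈ M(R,S) for some x}`. -/
def comm1 (L : Language) {A : Type u} [L.Structure A] (R S : A → A → Prop) :
    A → A → Prop :=
  Relation.TransGen (fun z w => ∃ x, InM L R S x x z w)

/-- Relational composition. -/
def rcomp {A : Type u} (R S : A → A → Prop) : A → A → Prop :=
  fun a c => ∃ b, R a b ∧ S b c

/-- Converse of a relation. -/
def rconv {A : Type u} (R : A → A → Prop) : A → A → Prop := fun a b => R b a

/-- Intersection of relations. -/
def rinter {A : Type u} (R S : A → A → Prop) : A → A → Prop := fun a b => R a b ∧ S a b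

/-- A congruence: a compatible equivalence relation. -/
def IsCongruence (L : Language) {A : Type u} [L.Structure A] (θ : A → A → Prop) : Prop :=
  Equivalence θ ∧ Compatible L θ

/-- A tolerance: a reflexive symmetric compatible relation. -/
def IsTolerance (L : Language) {A : Type u} [L.Structure A] (T : A → A → Prop) : Prop :=
  Reflexive T ∧ Symmetric T ∧ Compatible L T

/-- `Cg R`: the smallest congruence containing `R` (intersection of all congruences ⊇ R). -/
def Cg (L : Language) {A : Type u} [L.Structure A] (R : A → A → Prop) : A → A → Prop :=
  fun a b => ∀ θ : A → A → Prop, IsCongruence L θ → (∀ x y, R x y → θ x y) → θ a b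

/-- `R°`: the smallest tolerance containing `R`. -/
def tolC (L : Language) {A : Type u} [L.Structure A] (R : A → A → Prop) : A → A → Prop :=
  fun a b => ∀ T : A → A → Prop, IsTolerance L T → (∀ x y, R x y → T x y) → T a b

/-- `K(R,S;V) = {(z,w) : ∃ x y, (x,y;z,w) ∈ M(R,S) ∧ x V y}`. -/
def Kop (L : Language) {A : Type u} [L.Structure A] (R S V : A → A → Prop) :
    A → A → Prop :=
  fun z w => ∃ x y, InM L R S x y z w ∧ V x y

/-- The join `γ ∨ D`: the smallest congruence containing both `γ` and `D`. -/
def cgJoin (L : Language) {A : Type u} [L.Structure A] (γ D : A → A → Prop) :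
    A → A → Prop :=
  fun a b => ∀ θ : A → A → Prop, IsCongruence L θ → (∀ x y, γ x y → θ x y) →
    (∀ x y, D x y → θ x y) → θ a b

variable {L : Language} {A : Type u} [L.Structure A]

lemma term_compat {R : A → A → Prop} (hR : Compatible L R) {α : Type*}
    (t : L.Term α) (v v' : α → A) (hv : ∀ i, R (v i) (v' i)) :
    R (t.realize v) (t.realize v') := by
  induction t with
  | var i => exact hv i
  | func f ts ih =>
      simp only [Term.realize]
      exact hR _ f _ _ fun i => ih i

theorem stmt16
    (h : ∀ R : A → A → Prop, Reflexive R → Compatible L R →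
      ∀ a b, R a b → comm1 L R R a b) :
    ∀ γ : A → A → Prop, IsCongruence L γ →
      ∀ S T : A → A → Prop, Reflexive S → Compatible L S →
        Reflexive T → Compatible L T →
        (∀ a b, S a b ∧ rconv T a b → γ a b) →
        ∀ a b, γ a b ∧ rcomp S T a b →
          Relation.TransGen (rcomp (rinter γ S) (rinter γ T)) a b := by
  intro γ hγ S T hSr hSc hTr hTc hST a b hab
  set R : A → A → Prop := fun x y => γ x y ∧ rcomp S T x y with hRdef
  have hRr : Reflexive R := fun x => ⟨hγ.1.refl x, x, hSr x, hTr x⟩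
  have hRc : Compatible L R := by
    intro n f u u' hu
    refine ⟨hγ.2 n f u u' fun i => (hu i).1, ?_⟩
    choose c hc1 hc2 using fun i => (hu i).2
    exact ⟨Structure.funMap f c, hSc n f u c hc1, hTc n f c u' hc2⟩
  have hRab : R a b := hab
  have key : ∀ z w, (∃ x, InM L R R x x z w) →
      rcomp (rinter γ S) (rinter γ T) z w := by
    rintro z w ⟨x, n, m, t, u, u', v, v', hu, hv, hx1, hx2, hz, hw⟩
    have hvγ : ∀ j, γ (v j) (v' j) := fun j => (hv j).1
    have huγ : ∀ i, γ (u i) (u' i) := fun i => (hu i).1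
    choose d hd1 hd2 using fun j => (hv j).2
    set mid := t.realize (Sum.elim u' d) with hmid
    set p := t.realize (Sum.elim u d) with hp
    -- x S p
    have hxSp : S x p := by
      rw [hx1]
      exact term_compat hSc t _ _ (fun i => by cases i with
        | inl i => exact hSr _
        | inr j => exact hd1 j)
    have hpTx : T p x := by
      rw [hx2]
      exact term_compat hTc t _ _ (fun i => by cases i with
        | inl i => exact hTr _
        | inr j => exact hd2 j)
    have hxγp : γ x p := hST x p ⟨hxSp, hpTx⟩
    have hzγx : γ z x := by
      rw [hz, hx1]
      exact term_compat hγ.2 t _ _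
        (fun i => by cases i with
        | inl i => exact hγ.1.symm (huγ i)
        | inr j => exact hγ.1.refl _)
    have hpγm : γ p mid := by
      rw [hp, hmid]
      exact term_compat hγ.2 t _ _
        (fun i => by cases i with
        | inl i => exact huγ i
        | inr j => exact hγ.1.refl _)
    have hzγm : γ z mid := hγ.1.trans hzγx (hγ.1.trans hxγp hpγm)
    have hzγw : γ z w := by
      rw [hz, hw]
      exact term_compat hγ.2 t _ _
        (fun i => by cases i with
        | inl i => exact hγ.1.refl _
        | inr j => exact hvγ j)
    have hzSm : S z mid := by
      rw [hz, hmid]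
      exact term_compat hSc t _ _ (fun i => by cases i with
        | inl i => exact hSr _
        | inr j => exact hd1 j)
    have hmTw : T mid w := by
      rw [hmid, hw]
      exact term_compat hTc t _ _ (fun i => by cases i with
        | inl i => exact hTr _
        | inr j => exact hd2 j)
    exact ⟨mid, ⟨hzγm, hzSm⟩, ⟨hγ.1.trans (hγ.1.symm hzγm) hzγw, hmTw⟩⟩
  exact Relation.TransGen.mono key a b (h R hRr hRc a b hRab)
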